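/- arXiv:2202.01233 — 2 statements merged into one kernel-verified Lean document; each statement's English description precedes it below -/
import Mathlib

section
/- For every natural number k ≥ 1, with t = 2^k, there exists a set S of 2t binary strings of length t (namely the all-ones string together with 2t − 1 additional strings) such that any two distinct strings in S differ in at least t/2 coordinates (Hamming distance ≥ t/2). -/
open Finset Matrix

private lemma zmod2_ne_iff : ∀ u w : ZMod 2, ((decide (u = 1) ≠ decide (w = 1)) ↔ u + w = 1) := by
  decide

private lemma zmod2_eq_of : ∀ u w : ZMod 2, decide (u = 1) = decide (w = 1) → u = w := by
  decide

private lemma zmod2_flip : ∀ x : ZMod 2, (x + 1 = 1 ↔ ¬ (x = 1)) := by decide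

private lemma zmod2_cases : ∀ c : ZMod 2, c = 0 ∨ c = 1 := by decide

private lemma zmod2_ne_zero : ∀ c : ZMod 2, c ≠ 0 → c = 1 := by decide

private lemma zmod2_add_add : ∀ x y : ZMod 2, x + y + y = x := by decide

private lemma zmod2_add_zero_iff : ∀ x y : ZMod 2, x + y = 0 → x = y := by decide

/-- A nonzero affine functional on `(ZMod 2)^k` takes value `1` on exactly half the points. -/
private lemma half_count (k : ℕ) (d : Fin k → ZMod 2) (hd : d ≠ 0) (c : ZMod 2) :
    2 * ({v : Fin k → ZMod 2 | c + d ⬝ᵥ v = 1} : Finset _).card = 2 ^ k := by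
  classical
  obtain ⟨i, hi⟩ : ∃ i, d i ≠ 0 := by
    by_contra h
    push_neg at h
    exact hd (funext fun i => h i)
  have hdi : d i = 1 := zmod2_ne_zero _ hi
  set A : Finset (Fin k → ZMod 2) := univ.filter (fun v => c + d ⬝ᵥ v = 1) with hA
  set B : Finset (Fin k → ZMod 2) := univ.filter (fun v => ¬ (c + d ⬝ᵥ v = 1)) with hB
  have key : ∀ v : Fin k → ZMod 2, c + d ⬝ᵥ (v + Pi.single i 1) = (c + d ⬝ᵥ v) + 1 := by
    intro v
    rw [dotProduct_add, dotProduct_single, hdi, one_mul]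
    ring
  have inv : ∀ v : Fin k → ZMod 2, v + Pi.single i 1 + Pi.single i 1 = v := by
    intro v
    funext j
    by_cases h : j = i <;> simp [h, Pi.single_apply, zmod2_add_add]
  have hAB : A.card = B.card := by
    refine Finset.card_bij' (fun v _ => v + Pi.single i 1) (fun v _ => v + Pi.single i 1)
      ?_ ?_ ?_ ?_
    · intro v hv
      simp only [hA, Finset.mem_filter, Finset.mem_univ, true_and] at hv
      simp only [hB, Finset.mem_filter, Finset.mem_univ, true_and, key v]
      rw [zmod2_flip]
      simp [hv]
    · intro v hv
      simp only [hB, Finset.mem_filter, Finset.mem_univ, true_and] at hv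
      simp only [hA, Finset.mem_filter, Finset.mem_univ, true_and, key v]
      rw [zmod2_flip]
      exact hv
    · intro v _; exact inv v
    · intro v _; exact inv v
  have htot : A.card + B.card = 2 ^ k := by
    have := Finset.card_filter_add_card_filter_not
      (s := (univ : Finset (Fin k → ZMod 2))) (p := fun v => c + d ⬝ᵥ v = 1)
    simp only [← hA, ← hB, Finset.card_univ] at this
    simpa using this
  omega

/-- For every `k ≥ 1`, with `t = 2^k`, there exists a set `S` of `2*t` binary
strings of length `t`, containing the all-ones string, such that any two
distinct strings in `S` differ in at least `t/2` coordinates. -/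
theorem stmt_0 (k : ℕ) (hk : 1 ≤ k) :
    ∃ S : Finset (Fin (2 ^ k) → Bool),
      S.card = 2 * 2 ^ k ∧
      (fun _ => true) ∈ S ∧
      ∀ x ∈ S, ∀ y ∈ S, x ≠ y → 2 ^ k / 2 ≤ hammingDist x y := by
  classical
  have hcard : Fintype.card (Fin k → ZMod 2) = 2 ^ k := by simp
  set e : Fin (2 ^ k) ≃ (Fin k → ZMod 2) := (Fintype.equivFinOfCardEq hcard).symm with he
  set f : ZMod 2 × (Fin k → ZMod 2) → (Fin (2 ^ k) → Bool) :=
    fun p j => decide (p.1 + p.2 ⬝ᵥ e j = 1) with hf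
  have hinj : Function.Injective f := by
    intro p q h
    have hall : ∀ v : Fin k → ZMod 2, p.1 + p.2 ⬝ᵥ v = q.1 + q.2 ⬝ᵥ v := by
      intro v
      have := congrFun h (e.symm v)
      simp only [hf, Equiv.apply_symm_apply] at this
      exact zmod2_eq_of _ _ this
    have h1 : p.1 = q.1 := by
      have := hall 0
      simpa using this
    have h2 : p.2 = q.2 := by
      funext i
      have := hall (Pi.single i 1)
      rw [h1, dotProduct_single, dotProduct_single, mul_one, mul_one] at this
      exact add_left_cancel this
    exact Prod.ext h1 h2
  refine ⟨Finset.univ.image f, ?_, ?_, ?_⟩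
  · rw [Finset.card_image_of_injective _ hinj, Finset.card_univ]
    simp
  · rw [Finset.mem_image]
    refine ⟨(1, 0), Finset.mem_univ _, ?_⟩
    funext j
    simp [hf]
  · rintro x hx y hy hxy
    rw [Finset.mem_image] at hx hy
    obtain ⟨p, -, rfl⟩ := hx
    obtain ⟨q, -, rfl⟩ := hy
    have hpq : p ≠ q := fun h => hxy (by rw [h])
    have hdist : hammingDist (f p) (f q) =
        ({v : Fin k → ZMod 2 | (p.1 + q.1) + (p.2 + q.2) ⬝ᵥ v = 1} : Finset _).card := by
      unfold hammingDist
      apply Finset.card_bij (fun j _ => e j)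
      · intro j hj
        simp only [Finset.mem_filter, Finset.mem_univ, true_and, hf] at hj ⊢
        rw [zmod2_ne_iff] at hj
        rw [add_dotProduct]
        linear_combination hj
      · intro a _ b _ hab
        exact e.injective hab
      · intro v hv
        refine ⟨e.symm v, ?_, by simp⟩
        simp only [Finset.mem_filter, Finset.mem_univ, true_and] at hv ⊢
        simp only [hf, Equiv.apply_symm_apply]
        rw [zmod2_ne_iff]
        rw [add_dotProduct] at hv
        linear_combination hv
    rw [hdist]
    by_cases hd : p.2 + q.2 = 0
    · have h2 : p.2 = q.2 := by
        funext i
        exact zmod2_add_zero_iff _ _ (congrFun hd i)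
      have hc : p.1 + q.1 = 1 := by
        rcases zmod2_cases (p.1 + q.1) with h | h
        · exact absurd (Prod.ext (zmod2_add_zero_iff _ _ h) h2) hpq
        · exact h
      have huniv : ({v : Fin k → ZMod 2 | (p.1 + q.1) + (p.2 + q.2) ⬝ᵥ v = 1} : Finset _)
          = univ := by
        ext v
        simp [hc, hd]
      rw [huniv, Finset.card_univ, hcard]
      omega
    · have := half_count k (p.2 + q.2) hd (p.1 + q.1)
      omega
end

section
/- Extension to general even lengths: for any t whose binary expansion has lowest set bit at position k (so 2^k divides t but 2^{k+1} does not), there exist 2^{k+1} − 1 binary strings of length t that mutually differ from each other and from a given string by at least t/2 coordinates, obtained by concatenating t/2^k copies of the length-2^k strings from the power-of-two construction. -/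
open Finset

lemma zmod2_ne_zero_s18 {x : ZMod 2} (h : x ≠ 0) : x = 1 := by revert h; revert x; decide

lemma aux_count {t m : ℕ} {V : Type*} [Fintype V] [DecidableEq V]
    (e : Fin t ≃ Fin m × V) (p : V → Prop) [DecidablePred p] :
    (Finset.univ.filter fun i : Fin t => p (e i).2).card
      = m * (Finset.univ.filter p).card := by
  have h1 : (Finset.univ.filter fun i : Fin t => p (e i).2).card
      = (Finset.univ.filter fun z : Fin m × V => p z.2).card := by
    apply Finset.card_bij (fun i _ => e i)
    · intro i hi
      simp only [Finset.mem_filter, Finset.mem_univ, true_and] at hi ⊢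
      exact hi
    · intro a _ b _ h; exact e.injective h
    · intro z hz
      refine ⟨e.symm z, ?_, by simp⟩
      simp only [Finset.mem_filter, Finset.mem_univ, true_and] at hz ⊢
      simpa using hz
  rw [h1]
  have h2 : (Finset.univ.filter fun z : Fin m × V => p z.2)
      = Finset.univ ×ˢ (Finset.univ.filter p) := by
    ext z; simp
  rw [h2, Finset.card_product, Finset.card_univ, Fintype.card_fin]

lemma aux_wt {k : ℕ} (a : Fin k → ZMod 2) (b : ZMod 2) (h : ¬(a = 0 ∧ b = 0)) :
    2 ^ (k - 1) ≤ (Finset.univ.filter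
      fun x : Fin k → ZMod 2 => (∑ i, a i * x i) + b = 1).card := by
  by_cases ha : a = 0
  · have hb : b = 1 := zmod2_ne_zero_s18 (fun hb0 => h ⟨ha, hb0⟩)
    have heq : (Finset.univ.filter
        fun x : Fin k → ZMod 2 => (∑ i, a i * x i) + b = 1) = Finset.univ := by
      ext x; simp [ha, hb]
    rw [heq, Finset.card_univ]
    calc 2 ^ (k - 1) ≤ 2 ^ k := Nat.pow_le_pow_right (by norm_num) (Nat.sub_le k 1)
    _ = Fintype.card (Fin k → ZMod 2) := by simp [ZMod.card]
  · obtain ⟨j, hj⟩ := Function.ne_iff.1 ha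
    have haj : a j = 1 := zmod2_ne_zero_s18 (by simpa using hj)
    set A := (Finset.univ.filter
      fun x : Fin k → ZMod 2 => (∑ i, a i * x i) + b = 1) with hA
    set B := (Finset.univ.filter
      fun x : Fin k → ZMod 2 => ¬((∑ i, a i * x i) + b = 1)) with hB
    have hsum : A.card + B.card = 2 ^ k := by
      rw [hA, hB, Finset.card_filter_add_card_filter_not, Finset.card_univ]
      simp [ZMod.card]
    have hflip : ∀ x : Fin k → ZMod 2,
        (∑ i, a i * Function.update x j (x j + 1) i) = (∑ i, a i * x i) + 1 := by
      intro x
      have hupd : ∀ i, a i * Function.update x j (x j + 1) i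
          = Function.update (fun i => a i * x i) j (a j * (x j + 1)) i := by
        intro i
        by_cases hij : i = j
        · subst hij; simp
        · simp [Function.update_of_ne hij]
      rw [Finset.sum_congr rfl (fun i _ => hupd i),
        Finset.sum_update_of_mem (Finset.mem_univ j)]
      rw [show (Finset.univ : Finset (Fin k)) \ {j} = Finset.univ.erase j by
        simp [Finset.sdiff_singleton_eq_erase]]
      rw [← Finset.add_sum_erase _ _ (Finset.mem_univ j), haj]
      ring
    have hinj : ∀ x ∈ B, ∀ y ∈ B,
        Function.update x j (x j + 1) = Function.update y j (y j + 1) → x = y := by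
      intro x _ y _ hxy
      funext i
      by_cases hij : i = j
      · subst hij
        have h2 := congrFun hxy i
        simp only [Function.update_self] at h2
        exact add_right_cancel h2
      · have h2 := congrFun hxy i
        simpa [Function.update_of_ne hij] using h2
    have hmaps : ∀ x ∈ B, Function.update x j (x j + 1) ∈ A := by
      intro x hx
      rw [hB, Finset.mem_filter] at hx
      rw [hA, Finset.mem_filter]
      refine ⟨Finset.mem_univ _, ?_⟩
      rw [hflip]
      have h0 : (∑ i, a i * x i) + b = 0 := by
        by_contra hne
        exact hx.2 (zmod2_ne_zero_s18 hne)
      have hss : (∑ i, a i * x i) + (∑ i, a i * x i) = 0 := CharTwo.add_self_eq_zero _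
      linear_combination h0
    have hle : B.card ≤ A.card :=
      Finset.card_le_card_of_injOn _ hmaps hinj
    have h2 : 2 ^ k = 2 * 2 ^ (k - 1) := by
      cases k with
      | zero => exact absurd (funext fun i => i.elim0) ha
      | succ n => rw [pow_succ]; ring_nf; simp
    omega

/-- Extension to general even lengths: if `2^k` exactly divides the positive
even integer `t`, then there exist `2^(k+1) − 1` binary strings of length `t`
that mutually differ from each other and from a given string `w` by at least
`t/2` coordinates. -/
theorem stmt_18 (t k : ℕ) (ht : 0 < t) (hte : 2 ∣ t)
    (hk : 2 ^ k ∣ t) (hk2 : ¬ 2 ^ (k + 1) ∣ t) (w : Fin t → Bool) :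
    ∃ S : Finset (Fin t → Bool),
      S.card = 2 ^ (k + 1) - 1 ∧ w ∉ S ∧
      (∀ x ∈ S, t / 2 ≤ hammingDist x w) ∧
      ∀ x ∈ S, ∀ y ∈ S, x ≠ y → t / 2 ≤ hammingDist x y := by
  classical
  have hk1 : 1 ≤ k := by
    rcases Nat.eq_zero_or_pos k with h | h
    · subst h; exact absurd (by simpa using hte) hk2
    · exact h
  set m := t / 2 ^ k with hm
  have htm : m * 2 ^ k = t := Nat.div_mul_cancel hk
  have hm0 : 0 < m := Nat.div_pos (Nat.le_of_dvd ht hk) (by positivity)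
  have ht2 : 2 ≤ t := Nat.le_of_dvd ht hte
  -- t / 2 = m * 2 ^ (k - 1)
  have htd : t / 2 = m * 2 ^ (k - 1) := by
    have h1 : t = (m * 2 ^ (k - 1)) * 2 := by
      rw [← htm]
      have : 2 ^ k = 2 ^ (k - 1) * 2 := by
        rw [← pow_succ]; congr 1; omega
      rw [this]; ring
    omega
  have hcard : Fintype.card (Fin t) = Fintype.card (Fin m × (Fin k → ZMod 2)) := by
    simp [← htm, ZMod.card]
  set e : Fin t ≃ Fin m × (Fin k → ZMod 2) := Fintype.equivOfCardEq hcard with he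
  set u : ((Fin k → ZMod 2) × ZMod 2) → Fin t → Bool :=
    fun p i => xor (decide ((∑ r, p.1 r * (e i).2 r) + p.2 = 1)) (w i) with hu
  -- injectivity of u
  have huinj : Function.Injective u := by
    intro p q hpq
    have hs : ∀ i : Fin t,
        decide ((∑ r, p.1 r * (e i).2 r) + p.2 = 1) =
        decide ((∑ r, q.1 r * (e i).2 r) + q.2 = 1) := by
      intro i
      have h1 := congrFun hpq i
      simp only [hu] at h1
      cases hw : w i <;> rw [hw] at h1 <;> simpa using h1
    have hf : ∀ x : Fin k → ZMod 2,
        (∑ r, p.1 r * x r) + p.2 = (∑ r, q.1 r * x r) + q.2 := by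
      intro x
      have h1 := hs (e.symm (⟨0, hm0⟩, x))
      rw [Equiv.apply_symm_apply] at h1
      have h2 := decide_eq_decide.mp h1
      have key : ∀ u v : ZMod 2, (u = 1 ↔ v = 1) → u = v := by decide
      exact key _ _ h2
    have hb : p.2 = q.2 := by
      have := hf 0
      simpa using this
    have ha : p.1 = q.1 := by
      funext j
      have := hf (Pi.single j 1)
      simp only [Pi.single_apply, mul_ite, mul_one, mul_zero,
        Finset.sum_ite_eq', Finset.mem_univ, if_true, hb] at this
      exact add_right_cancel this
    exact Prod.ext ha hb
  -- distance computation
  have hdist : ∀ p q : ((Fin k → ZMod 2) × ZMod 2), p ≠ q →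
      t / 2 ≤ hammingDist (u p) (u q) := by
    intro p q hpq
    have hiff : ∀ i : Fin t, ((u p) i ≠ (u q) i) ↔
        ((∑ r, (p.1 - q.1) r * (e i).2 r) + (p.2 - q.2) = 1) := by
      intro i
      have hsub : (∑ r, (p.1 - q.1) r * (e i).2 r) + (p.2 - q.2)
          = ((∑ r, p.1 r * (e i).2 r) + p.2) - ((∑ r, q.1 r * (e i).2 r) + q.2) := by
        simp only [Pi.sub_apply, sub_mul, Finset.sum_sub_distrib]
        ring
      rw [hsub]
      have key : ∀ u v : ZMod 2, ((!decide (u = 1)) = decide (v = 1)) ↔ u - v = 1 := by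
        decide
      have key2 : ∀ u v : ZMod 2, (¬(decide (u = 1) = decide (v = 1))) ↔ u - v = 1 := by
        decide
      simp only [hu]
      cases hw : w i <;> simp only [Bool.xor_false, Bool.xor_true, ne_eq,
        Bool.not_not_eq, Bool.not_eq_not] <;> first | exact key _ _ | exact key2 _ _
    have hcnt : hammingDist (u p) (u q) =
        m * (Finset.univ.filter
          fun x : Fin k → ZMod 2 => (∑ r, (p.1 - q.1) r * x r) + (p.2 - q.2) = 1).card := by
      rw [hammingDist]
      rw [Finset.filter_congr (fun i _ => hiff i)]
      exact aux_count e (fun x => (∑ r, (p.1 - q.1) r * x r) + (p.2 - q.2) = 1)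
    rw [hcnt, htd]
    apply Nat.mul_le_mul_left
    apply aux_wt
    rintro ⟨h1, h2⟩
    apply hpq
    have : p.1 = q.1 := by rwa [sub_eq_zero] at h1
    have hb2 : p.2 = q.2 := by rwa [sub_eq_zero] at h2
    exact Prod.ext this hb2
  -- distance to w
  have hdistw : ∀ p : ((Fin k → ZMod 2) × ZMod 2), p ≠ 0 →
      t / 2 ≤ hammingDist (u p) w := by
    intro p hp
    have hw : u 0 = w := by
      funext i
      simp [hu]
    calc t / 2 ≤ hammingDist (u p) (u 0) := hdist p 0 hp
    _ = hammingDist (u p) w := by rw [hw]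
  refine ⟨(Finset.univ.erase (0 : (Fin k → ZMod 2) × ZMod 2)).image u, ?_, ?_, ?_, ?_⟩
  · rw [Finset.card_image_of_injective _ huinj,
      Finset.card_erase_of_mem (Finset.mem_univ _), Finset.card_univ]
    congr 1
    simp [ZMod.card, pow_succ]
  · intro hw
    obtain ⟨p, hp, hpw⟩ := Finset.mem_image.mp hw
    have hp0 : p ≠ 0 := (Finset.mem_erase.mp hp).1
    have := hdistw p hp0
    rw [hpw, hammingDist_self] at this
    omega
  · intro x hx
    obtain ⟨p, hp, rfl⟩ := Finset.mem_image.mp hx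
    exact hdistw p (Finset.mem_erase.mp hp).1
  · intro x hx y hy hxy
    obtain ⟨p, hp, rfl⟩ := Finset.mem_image.mp hx
    obtain ⟨q, hq, rfl⟩ := Finset.mem_image.mp hy
    exact hdist p q (fun h => hxy (by rw [h]))
end
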